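/- Let (ΔX_n, ΔT_n), n ≥ 1, be iid pairs with E(ΔT) = μ ∈ (0,∞), a = E(ΔX)/E(ΔT), and σ² = Var(ΔX − aΔT) < ∞, and let X(t) be a process whose increments over the cycles [T_{n-1}, T_n) (with T_n = Σ_{k≤n} ΔT_k) are ΔX_n, and whose within-cycle excursion M = sup over a cycle of |X(t) − X(T_{n-1})| has finite mean. Then X(t)/t → a almost surely as t → ∞. -/

import Mathlib

open MeasureTheory ProbabilityTheory Filter

/-- Deterministic skeleton: if the regeneration times `τ` grow linearly with rate `c`,
the cycle sums `s` grow linearly with rate `b`, and excursions `m` are `o(n)`, then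
`f t / t → b / c`. -/
private lemma regen_det_lemma {τ s m : ℕ → ℝ} {f : ℝ → ℝ} {b c : ℝ} (hc : 0 < c)
    (hτ0 : τ 0 = 0) (hτmono : StrictMono τ)
    (hτ : Tendsto (fun n => τ n / n) atTop (nhds c))
    (hs : Tendsto (fun n => s n / n) atTop (nhds b))
    (hm : Tendsto (fun n => m n / n) atTop (nhds 0))
    (hf : ∀ n t, τ n ≤ t → t ≤ τ (n + 1) → |f t - s n| ≤ m n) :
    Tendsto (fun t : ℝ => f t / t) atTop (nhds (b / c)) := by
  -- τ n → ∞
  have hτtop : Tendsto τ atTop atTop := by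
    have h1 : Tendsto (fun n : ℕ => (τ n / n) * n) atTop atTop :=
      hτ.pos_mul_atTop hc tendsto_natCast_atTop_atTop
    refine h1.congr' ?_
    filter_upwards [eventually_ge_atTop 1] with n hn
    have : (n : ℝ) ≠ 0 := by positivity
    field_simp
  -- the index process
  set N : ℝ → ℕ := fun t => sSup {n | τ n ≤ t} with hN
  have hbdd : ∀ t : ℝ, BddAbove {n | τ n ≤ t} := by
    intro t
    obtain ⟨K, hK⟩ := (hτtop.eventually_gt_atTop t).exists
    exact ⟨K, fun n hn => (hτmono.lt_iff_lt.mp (lt_of_le_of_lt hn hK)).le⟩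
  have hne : ∀ t : ℝ, 0 ≤ t → ({n | τ n ≤ t} : Set ℕ).Nonempty := by
    intro t ht; exact ⟨0, by simpa [hτ0] using ht⟩
  have hN1 : ∀ t : ℝ, 0 ≤ t → τ (N t) ≤ t := fun t ht => Nat.sSup_mem (hne t ht) (hbdd t)
  have hN2 : ∀ t : ℝ, 0 ≤ t → t < τ (N t + 1) := by
    intro t ht
    by_contra h
    push_neg at h
    have : N t + 1 ≤ N t := le_csSup (hbdd t) h
    omega
  have hNmem : ∀ (t : ℝ) (k : ℕ), τ k ≤ t → k ≤ N t := fun t k hk => le_csSup (hbdd t) hk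
  have hNtop : Tendsto N atTop atTop := by
    refine tendsto_atTop.2 fun K => ?_
    filter_upwards [eventually_ge_atTop (τ K)] with t ht
    exact hNmem t K ht
  -- eventually N t ≥ 1 and t ≥ 0
  have hEv : ∀ᶠ t : ℝ in atTop, 0 ≤ t ∧ 1 ≤ N t := by
    filter_upwards [eventually_ge_atTop (max (τ 1) 0)] with t ht
    have ht0 : (0:ℝ) ≤ t := le_trans (le_max_right _ _) ht
    exact ⟨ht0, hNmem t 1 (le_trans (le_max_left _ _) ht)⟩
  -- τ (n+1) / n → c
  have hτsucc : Tendsto (fun n : ℕ => τ (n + 1) / n) atTop (nhds c) := by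
    have e1 : Tendsto (fun n : ℕ => τ (n + 1) / ((n : ℝ) + 1)) atTop (nhds c) := by
      have h := hτ.comp (tendsto_add_atTop_nat 1)
      refine h.congr fun n => ?_
      simp only [Function.comp]
      push_cast
      ring
    have e2 : Tendsto (fun n : ℕ => ((n : ℝ) + 1) / n) atTop (nhds 1) := by
      have h0 : Tendsto (fun n : ℕ => 1 + (1:ℝ) / n) atTop (nhds (1 + 0)) :=
        tendsto_const_nhds.add tendsto_one_div_atTop_nhds_zero_nat
      have h0' : Tendsto (fun n : ℕ => 1 + (1:ℝ) / n) atTop (nhds 1) := by simpa using h0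
      refine h0'.congr' ?_
      filter_upwards [eventually_ge_atTop 1] with n hn
      have : (n : ℝ) ≠ 0 := by positivity
      field_simp
    have := e1.mul e2
    rw [mul_one] at this
    refine this.congr' ?_
    filter_upwards [eventually_ge_atTop 1] with n hn
    have h1 : (n : ℝ) ≠ 0 := by positivity
    have h2 : (n : ℝ) + 1 ≠ 0 := by positivity
    field_simp
  -- t / N t → c
  have htN : Tendsto (fun t : ℝ => t / N t) atTop (nhds c) := by
    refine tendsto_of_tendsto_of_tendsto_of_le_of_le' (hτ.comp hNtop) (hτsucc.comp hNtop) ?_ ?_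
    · filter_upwards [hEv] with t ⟨ht0, htN⟩
      have hNpos : (0:ℝ) < N t := by exact_mod_cast htN
      exact div_le_div_of_nonneg_right (hN1 t ht0) hNpos.le
    · filter_upwards [hEv] with t ⟨ht0, htN⟩
      have hNpos : (0:ℝ) < N t := by exact_mod_cast htN
      exact div_le_div_of_nonneg_right (hN2 t ht0).le hNpos.le
  -- f t / N t → b
  have hfN : Tendsto (fun t : ℝ => f t / N t) atTop (nhds b) := by
    have lo : Tendsto (fun t : ℝ => (s (N t) - m (N t)) / N t) atTop (nhds (b - 0)) := by
      have := (hs.sub hm).comp hNtop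
      refine this.congr fun t => ?_
      simp [Function.comp, sub_div]
    have hi : Tendsto (fun t : ℝ => (s (N t) + m (N t)) / N t) atTop (nhds (b + 0)) := by
      have := (hs.add hm).comp hNtop
      refine this.congr fun t => ?_
      simp [Function.comp, add_div]
    rw [sub_zero] at lo; rw [add_zero] at hi
    refine tendsto_of_tendsto_of_tendsto_of_le_of_le' lo hi ?_ ?_
    · filter_upwards [hEv] with t ⟨ht0, htN⟩
      have hNpos : (0:ℝ) < N t := by exact_mod_cast htN
      have hb := hf (N t) t (hN1 t ht0) (hN2 t ht0).le
      have := (abs_le.mp hb).1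
      have hle : s (N t) - m (N t) ≤ f t := by linarith
      exact div_le_div_of_nonneg_right hle hNpos.le
    · filter_upwards [hEv] with t ⟨ht0, htN⟩
      have hNpos : (0:ℝ) < N t := by exact_mod_cast htN
      have hb := hf (N t) t (hN1 t ht0) (hN2 t ht0).le
      have := (abs_le.mp hb).2
      have hle : f t ≤ s (N t) + m (N t) := by linarith
      exact div_le_div_of_nonneg_right hle hNpos.le
  -- conclude
  have := hfN.div htN hc.ne'
  refine this.congr' ?_
  filter_upwards [hEv] with t ⟨ht0, htN⟩
  have hNne : (N t : ℝ) ≠ 0 := by positivity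
  have htne : t ≠ 0 := by
    have h1 : (1:ℝ) ≤ N t := by exact_mod_cast htN
    have := hN1 t ht0
    -- τ (N t) ≥ τ 1 > τ 0 = 0
    have hpos : 0 < τ (N t) ∨ 0 ≤ τ (N t) := Or.inr (by
      rw [← hτ0]; exact (hτmono.le_iff_le.mpr (Nat.zero_le _)))
    nlinarith [hτmono (show 0 < 1 by norm_num), hτ0,
      hτmono.le_iff_le.mpr htN, hN1 t ht0]
  simp only [Pi.div_apply]
  field_simp

/-- Identically distributed integrable random variables are `o(n)` almost surely. -/
private lemma regen_mb_tendsto {Ω : Type*} [MeasurableSpace Ω] (μ : Measure Ω)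
    [IsProbabilityMeasure μ] (Z : ℕ → Ω → ℝ) (hmeas : ∀ n, Measurable (Z n))
    (hid : ∀ n, IdentDistrib (Z n) (Z 0) μ μ) (hint : Integrable (Z 0) μ) :
    ∀ᵐ ω ∂μ, Tendsto (fun n : ℕ => Z n ω / n) atTop (nhds 0) := by
  have key : ∀ k : ℕ, ∀ᵐ ω ∂μ, ∀ᶠ n : ℕ in atTop,
      ((k : ℝ) + 1) * |Z n ω| ≤ n := by
    intro k
    set V : Ω → ℝ := fun ω => ((k : ℝ) + 1) * |Z 0 ω| with hV
    have hVint : Integrable V μ := (hint.abs).const_mul _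
    have hVnn : 0 ≤ V := fun ω => by positivity
    -- use Borel-Cantelli
    set s : ℕ → Set Ω := fun n => {ω | ((k : ℝ) + 1) * |Z n ω| ∈ Set.Ioi (n : ℝ)} with hs
    have hsum : (∑' n, μ (s n)) ≠ ⊤ := by
      have heq : ∀ n, μ (s n) = μ {ω | V ω ∈ Set.Ioi (n : ℝ)} := by
        intro n
        have hidn : IdentDistrib (fun ω => ((k : ℝ) + 1) * |Z n ω|) V μ μ :=
          (hid n).comp (measurable_const.mul measurable_abs)
        exact hidn.measure_mem_eq measurableSet_Ioi
      have hfin : (∑' n : ℕ, μ {ω | V ω ∈ Set.Ioi (n : ℝ)}) < ⊤ := by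
        let mΩ : MeasureSpace Ω := ⟨μ⟩
        exact ProbabilityTheory.tsum_prob_mem_Ioi_lt_top hVint hVnn
      rw [tsum_congr heq]
      exact hfin.ne
    have := ae_eventually_notMem hsum
    filter_upwards [this] with ω hω
    filter_upwards [hω] with n hn
    simpa [s, Set.mem_setOf_eq, not_lt] using hn
  rw [← ae_all_iff] at key
  filter_upwards [key] with ω hω
  rw [NormedAddCommGroup.tendsto_nhds_zero]
  intro ε hε
  obtain ⟨k, hk⟩ := exists_nat_one_div_lt hε
  filter_upwards [hω k, eventually_ge_atTop 1] with n h1 h2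
  have hnpos : (0:ℝ) < n := by exact_mod_cast h2
  have hkpos : (0:ℝ) < (k : ℝ) + 1 := by positivity
  have : |Z n ω| ≤ n / ((k : ℝ) + 1) := by
    rw [le_div_iff₀ hkpos]; linarith [h1]
  calc ‖Z n ω / n‖ = |Z n ω| / n := by
        rw [Real.norm_eq_abs, abs_div, abs_of_pos hnpos]
    _ ≤ (n / ((k : ℝ) + 1)) / n := by
        exact div_le_div_of_nonneg_right this hnpos.le
    _ = 1 / ((k : ℝ) + 1) := by field_simp
    _ < ε := hk

/-- law of large numbers for a process with regenerative increments
(Serfozo).  `Y n = (ΔX_{n+1}, ΔT_{n+1})` are iid cycle (displacement, duration) pairs with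
`ΔT > 0` a.s., mean cycle duration `μ' = E(ΔT) ∈ (0, ∞)`, `a = E(ΔX)/E(ΔT)`,
`σ² = Var(ΔX − aΔT) < ∞`; `T n` are the regeneration times (partial sums of the durations),
the increments of the path `X` over cycles are the `ΔX_n`, and the within-cycle excursions
are dominated by identically distributed random variables `Mb n` with finite mean.  Then
`X(t)/t → a = E(ΔX)/E(ΔT)` almost surely as `t → ∞`. -/
theorem regenerative_increments_lln
    {Ω : Type*} [MeasurableSpace Ω] (μ : Measure Ω) [IsProbabilityMeasure μ]
    (Y : ℕ → Ω → ℝ × ℝ) (hYmeas : ∀ n, Measurable (Y n))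
    (hindep : iIndepFun (β := fun _ : ℕ => ℝ × ℝ) Y μ)
    (hident : ∀ n, IdentDistrib (Y n) (Y 0) μ μ)
    (hint1 : Integrable (fun ω => (Y 0 ω).1) μ)
    (hint2 : Integrable (fun ω => (Y 0 ω).2) μ)
    (hTpos : ∀ᵐ ω ∂μ, ∀ n, 0 < (Y n ω).2)
    (hμpos : 0 < ∫ ω, (Y 0 ω).2 ∂μ)
    (hσ : MemLp (fun ω => (Y 0 ω).1 -
      ((∫ ω', (Y 0 ω').1 ∂μ) / ∫ ω', (Y 0 ω').2 ∂μ) * (Y 0 ω).2) 2 μ)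
    (T : ℕ → Ω → ℝ) (hT : ∀ n ω, T n ω = ∑ k ∈ Finset.range n, (Y k ω).2)
    (X : ℝ → Ω → ℝ) (hX0 : ∀ ω, X 0 ω = 0)
    (hinc : ∀ n ω, X (T (n + 1) ω) ω - X (T n ω) ω = (Y n ω).1)
    (Mb : ℕ → Ω → ℝ) (hMbmeas : ∀ n, Measurable (Mb n))
    (hMb : ∀ n ω t, T n ω ≤ t → t ≤ T (n + 1) ω → |X t ω - X (T n ω) ω| ≤ Mb n ω)
    (hMbident : ∀ n, IdentDistrib (Mb n) (Mb 0) μ μ)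
    (hMbint : Integrable (Mb 0) μ) :
    ∀ᵐ ω ∂μ, Tendsto (fun t : ℝ => X t ω / t) atTop
      (nhds ((∫ ω', (Y 0 ω').1 ∂μ) / ∫ ω', (Y 0 ω').2 ∂μ)) := by
  -- SLLN for the durations
  have hTlln : ∀ᵐ ω ∂μ, Tendsto (fun n : ℕ => T n ω / n) atTop
      (nhds (∫ ω', (Y 0 ω').2 ∂μ)) := by
    have h := strong_law_ae_real (fun n ω => (Y n ω).2) hint2
      (fun i j hij => ((hindep.indepFun hij).comp measurable_snd measurable_snd))
      (fun i => (hident i).comp measurable_snd)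
    filter_upwards [h] with ω hω
    refine hω.congr fun n => ?_
    rw [hT]
  -- SLLN for the displacements
  have hSlln : ∀ᵐ ω ∂μ, Tendsto (fun n : ℕ => (∑ k ∈ Finset.range n, (Y k ω).1) / n) atTop
      (nhds (∫ ω', (Y 0 ω').1 ∂μ)) :=
    strong_law_ae_real (fun n ω => (Y n ω).1) hint1
      (fun i j hij => ((hindep.indepFun hij).comp measurable_fst measurable_fst))
      (fun i => (hident i).comp measurable_fst)
  -- excursion bounds are o(n)
  have hMlln := regen_mb_tendsto μ Mb hMbmeas hMbident hMbint
  filter_upwards [hTlln, hSlln, hMlln, hTpos] with ω h1 h2 h3 h4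
  -- X at regeneration times equals the partial sums
  have hXT : ∀ n, X (T n ω) ω = ∑ k ∈ Finset.range n, (Y k ω).1 := by
    intro n
    induction n with
    | zero => simp [hT, hX0]
    | succ n ih =>
      have := hinc n ω
      rw [Finset.sum_range_succ, ← ih]
      linarith
  refine regen_det_lemma hμpos ?_ ?_ h1 h2 h3 ?_
  · simp [hT]
  · refine strictMono_nat_of_lt_succ fun n => ?_
    have h5 := h4 n
    rw [hT (n + 1), Finset.sum_range_succ, ← hT n]
    linarith
  · intro n t ht1 ht2
    rw [← hXT n]
    exact hMb n ω t ht1 ht2
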